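/- Let Σ be a finite alphabet and X ⊆ Σ^ℕ a nonempty subshift with language L, and let S_X = L ∪ {0} be the associated semigroup with zero. Call a word ω admissible if ω is a finite word belonging to L or an infinite word belonging to X, and for an admissible ω let δ_ω be the set of all prefixes of ω of positive length (each such prefix lies in L). Then: (i) δ_ω is a string in S_X; (ii) δ_ω is an open string if and only if ω is infinite; (iii) δ_ω is a maximal string if and only if ω is infinite; (iv) for every string σ in S_X there is a unique admissible word ω with σ = δ_ω. -/

import Mathlib

namespace ExSt

/-- The language semigroup `S = L ∪ {0}`, with `none` playing the role of `0`. -/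
abbrev LangSG (A : Type*) (L : Set (List A)) : Type _ := Option {w : List A // w ∈ L}

open Classical in
/-- Multiplication on `S = L ∪ {0}`: concatenation if the result lies in `L`, `0`
otherwise. -/
noncomputable def langMul {A : Type*} (L : Set (List A)) :
    LangSG A L → LangSG A L → LangSG A L
  | some a, some b => if h : a.1 ++ b.1 ∈ L then some ⟨a.1 ++ b.1, h⟩ else none
  | _, _ => none

/-- Divisibility in the language semigroup. -/
def langDivides {A : Type*} (L : Set (List A)) (s t : LangSG A L) : Prop :=
  t = s ∨ ∃ u : LangSG A L, t = langMul L s u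

/-- A string in the language semigroup. -/
def langIsString {A : Type*} (L : Set (List A)) (σ : Set (LangSG A L)) : Prop :=
  σ.Nonempty ∧ none ∉ σ ∧ (∀ s t : LangSG A L, langDivides L s t → t ∈ σ → s ∈ σ) ∧
    ∀ s₁ ∈ σ, ∀ s₂ ∈ σ, ∃ s ∈ σ, langDivides L s₁ s ∧ langDivides L s₂ s

/-- The interior of a string in the language semigroup. -/
def langInterior {A : Type*} (L : Set (List A)) (σ : Set (LangSG A L)) :
    Set (LangSG A L) :=
  {s | ∃ x : LangSG A L, langMul L s x ∈ σ}

/-- The language of a subshift `X ⊆ Σ^ℕ`: finite words of positive length occurring as a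
block of some element of `X`. -/
def shiftLang {A : Type*} (X : Set (ℕ → A)) : Set (List A) :=
  {w | w ≠ [] ∧ ∃ x ∈ X, ∃ n : ℕ, ∀ (i : ℕ) (h : i < w.length), w.get ⟨i, h⟩ = x (n + i)}

/-- A word (finite or infinite) is admissible if it belongs to the language (finite case) or
to the subshift (infinite case). -/
def Admissible {A : Type*} (X : Set (ℕ → A)) : List A ⊕ (ℕ → A) → Prop
  | Sum.inl w => w ∈ shiftLang X
  | Sum.inr x => x ∈ X

/-- The set `δ_ω` of prefixes of positive length of an admissible word `ω`, viewed inside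
the language semigroup `S_X`. -/
def deltaSet {A : Type*} (X : Set (ℕ → A)) :
    List A ⊕ (ℕ → A) → Set (LangSG A (shiftLang X))
  | Sum.inl w => {a | ∃ p : {w' : List A // w' ∈ shiftLang X},
      a = some p ∧ p.1 ≠ [] ∧ p.1 <+: w}
  | Sum.inr x => {a | ∃ p : {w' : List A // w' ∈ shiftLang X},
      a = some p ∧ p.1 ≠ [] ∧ ∀ (i : ℕ) (h : i < p.1.length), p.1.get ⟨i, h⟩ = x i}

section Aux
variable {A : Type*} {X : Set (ℕ → A)}

lemma prefix_of_get_eq {a b : List A} (hlen : a.length ≤ b.length)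
    (h : ∀ i (hi : i < a.length), a.get ⟨i, hi⟩ = b.get ⟨i, lt_of_lt_of_le hi hlen⟩) :
    a <+: b := by
  have he : a = b.take a.length := by
    apply List.ext_get
    · simp [Nat.min_eq_left hlen]
    · intro n h1 h2
      rw [h n h1]
      simp [List.get_eq_getElem, List.getElem_take]
  rw [he]; exact List.take_prefix _ _

lemma agree_mem_lang {x : ℕ → A} (hx : x ∈ X) {q : List A} (hq : q ≠ [])
    (h : ∀ i (hi : i < q.length), q.get ⟨i, hi⟩ = x i) : q ∈ shiftLang X :=
  ⟨hq, x, hx, 0, fun i hi => by rw [h i hi, Nat.zero_add]⟩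

lemma ofFn_mem_lang {x : ℕ → A} (hx : x ∈ X) {m : ℕ} (hm : 0 < m) :
    (List.ofFn fun j : Fin m => x j) ∈ shiftLang X := by
  have hlen : (List.ofFn fun j : Fin m => x j).length = m := List.length_ofFn
  refine agree_mem_lang hx ?_ ?_
  · intro hnil; rw [hnil] at hlen; simp at hlen; omega
  · intro i hi; simp [List.get_ofFn]

lemma prefix_mem_lang {a b : List A} (hb : b ∈ shiftLang X) (ha : a ≠ []) (hab : a <+: b) :
    a ∈ shiftLang X := by
  obtain ⟨-, x, hx, n, hg⟩ := hb
  refine ⟨ha, x, hx, n, fun i hi => ?_⟩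
  have h1 := hab.getElem hi
  have hlen := hab.length_le
  simp only [List.get_eq_getElem] at hg ⊢
  rw [h1]; exact hg i (lt_of_lt_of_le hi hlen)

lemma suffix_mem_lang {a c : List A} (hb : a ++ c ∈ shiftLang X) (hc : c ≠ []) :
    c ∈ shiftLang X := by
  obtain ⟨-, x, hx, n, hg⟩ := hb
  refine ⟨hc, x, hx, n + a.length, fun i hi => ?_⟩
  have hi' : a.length + i < (a ++ c).length := by simp; omega
  have h1 := hg (a.length + i) hi'
  simp only [List.get_eq_getElem] at h1 ⊢
  rw [List.getElem_append_right (Nat.le_add_right _ _)] at h1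
  simp only [Nat.add_sub_cancel_left] at h1
  rw [h1]; ring_nf

lemma divides_some {s : LangSG A (shiftLang X)} {b : {w // w ∈ shiftLang X}}
    (h : langDivides (shiftLang X) s (some b)) : ∃ a, s = some a ∧ a.1 <+: b.1 := by
  rcases h with h | ⟨u, h⟩
  · exact ⟨b, h.symm, List.prefix_refl _⟩
  · match s, u with
    | none, _ => simp [langMul] at h
    | some a, none => simp [langMul] at h
    | some a, some c =>
      simp only [langMul] at h
      split at h
      · refine ⟨a, rfl, c.1, ?_⟩
        have := Option.some.inj h
        rw [this]
      · exact absurd h (by simp)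

lemma some_divides {a b : {w // w ∈ shiftLang X}} (h : a.1 <+: b.1) :
    langDivides (shiftLang X) (some a) (some b) := by
  obtain ⟨c, hc⟩ := h
  by_cases hcnil : c = []
  · left; congr 1; exact Subtype.ext (by rw [← hc, hcnil, List.append_nil])
  · have hcL : c ∈ shiftLang X := suffix_mem_lang (by rw [hc]; exact b.2) hcnil
    refine Or.inr ⟨some ⟨c, hcL⟩, ?_⟩
    have hm : a.1 ++ c ∈ shiftLang X := hc ▸ b.2
    simp only [langMul, dif_pos hm]
    exact congrArg some (Subtype.ext hc.symm)

lemma string_mem_some {σ : Set (LangSG A (shiftLang X))} (hσ : langIsString (shiftLang X) σ)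
    {s} (hs : s ∈ σ) : ∃ a, s = some a := by
  cases s with
  | none => exact absurd hs hσ.2.1
  | some a => exact ⟨a, rfl⟩

lemma string_comparable {σ : Set (LangSG A (shiftLang X))} (hσ : langIsString (shiftLang X) σ)
    {a b} (ha : some a ∈ σ) (hb : some b ∈ σ) : a.1 <+: b.1 ∨ b.1 <+: a.1 := by
  obtain ⟨s, hs, h1, h2⟩ := hσ.2.2.2 _ ha _ hb
  obtain ⟨c, rfl⟩ := string_mem_some hσ hs
  obtain ⟨a', ha', hpa⟩ := divides_some h1
  obtain ⟨b', hb', hpb⟩ := divides_some h2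
  rcases Option.some.inj ha' with rfl
  rcases Option.some.inj hb' with rfl
  exact List.prefix_or_prefix_of_prefix hpa hpb

lemma string_prefix_closed {σ : Set (LangSG A (shiftLang X))} (hσ : langIsString (shiftLang X) σ)
    {b} (hb : some b ∈ σ) {a : List A} (ha : a ≠ []) (hab : a <+: b.1) :
    ∃ h : a ∈ shiftLang X, some ⟨a, h⟩ ∈ σ := by
  have haL : a ∈ shiftLang X := prefix_mem_lang b.2 ha hab
  exact ⟨haL, hσ.2.2.1 _ _ (some_divides hab) hb⟩

lemma interior_subset_of_string {σ : Set (LangSG A (shiftLang X))}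
    (hσ : langIsString (shiftLang X) σ) : langInterior (shiftLang X) σ ⊆ σ := by
  rintro s ⟨u, hu⟩
  exact hσ.2.2.1 s _ (Or.inr ⟨u, rfl⟩) hu

lemma shift_iter (hXsh : ∀ x ∈ X, (fun n => x (n + 1)) ∈ X) {x : ℕ → A} (hx : x ∈ X) (k : ℕ) :
    (fun i => x (k + i)) ∈ X := by
  induction k with
  | zero => simpa using hx
  | succ k ih =>
    have h2 := hXsh _ ih
    have he : (fun n => x (k + (n + 1))) = (fun i => x (k + 1 + i)) := by
      funext n; congr 1; omega
    exact Set.mem_of_eq_of_mem he.symm h2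

lemma limit_mem
    (hXcl : @IsClosed (ℕ → A) (@Pi.topologicalSpace ℕ (fun _ => A) (fun _ => ⊥)) X)
    {x : ℕ → A} (z : ℕ → ℕ → A) (hzX : ∀ n, z n ∈ X) (hagree : ∀ n, ∀ i ≤ n, z n i = x i) :
    x ∈ X := by
  letI : TopologicalSpace A := ⊥
  haveI : DiscreteTopology A := ⟨rfl⟩
  have hcl : IsClosed X := hXcl
  refine hcl.mem_of_tendsto (f := z) (b := Filter.atTop) ?_ (Filter.Eventually.of_forall hzX)
  rw [tendsto_pi_nhds]
  intro i
  rw [nhds_discrete, Filter.tendsto_pure]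
  exact Filter.eventually_atTop.2 ⟨i, fun n hn => hagree n i hn⟩

lemma mem_delta_inl {w : List A} {p : {w' : List A // w' ∈ shiftLang X}} :
    (some p : LangSG A (shiftLang X)) ∈ deltaSet X (Sum.inl w) ↔ p.1 <+: w := by
  constructor
  · rintro ⟨q, hq, -, hpre⟩; rcases Option.some.inj hq with rfl; exact hpre
  · intro h; exact ⟨p, rfl, p.2.1, h⟩

lemma mem_delta_inr {x : ℕ → A} {p : {w' : List A // w' ∈ shiftLang X}} :
    (some p : LangSG A (shiftLang X)) ∈ deltaSet X (Sum.inr x) ↔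
      ∀ i (h : i < p.1.length), p.1.get ⟨i, h⟩ = x i := by
  constructor
  · rintro ⟨q, hq, -, hpre⟩; rcases Option.some.inj hq with rfl; exact hpre
  · intro h; exact ⟨p, rfl, p.2.1, h⟩

lemma none_not_mem_delta {ω : List A ⊕ (ℕ → A)} :
    (none : LangSG A (shiftLang X)) ∉ deltaSet X ω := by
  cases ω <;> rintro ⟨q, hq, -⟩ <;> exact Option.some_ne_none _ hq.symm

lemma snoc_agree {x : ℕ → A} {p : List A} (hp : ∀ i (hi : i < p.length), p.get ⟨i, hi⟩ = x i) :
    ∀ i (hi : i < (p ++ [x p.length]).length), (p ++ [x p.length]).get ⟨i, hi⟩ = x i := by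
  intro i hi
  simp only [List.length_append, List.length_singleton] at hi
  simp only [List.get_eq_getElem]
  rcases lt_or_ge i p.length with h | h
  · rw [List.getElem_append_left h]
    simpa only [List.get_eq_getElem] using hp i h
  · have hieq : i = p.length := by omega
    subst hieq
    rw [List.getElem_append_right le_rfl]
    simp

end Aux
section Main
variable {A : Type*} {X : Set (ℕ → A)}

lemma ofFn_get {x : ℕ → A} {m i : ℕ} (h : i < (List.ofFn fun j : Fin m => x j).length) :
    (List.ofFn fun j : Fin m => x j).get ⟨i, h⟩ = x i := by simp [List.get_ofFn]

lemma ofFn_mem_delta_inr {x : ℕ → A} (hx : x ∈ X) {m : ℕ} (hm : 0 < m) :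
    (some ⟨List.ofFn fun j : Fin m => x j, ofFn_mem_lang hx hm⟩ : LangSG A (shiftLang X)) ∈
      deltaSet X (Sum.inr x) :=
  mem_delta_inr.2 fun _ h => ofFn_get h

lemma delta_inj {ω ω' : List A ⊕ (ℕ → A)} (h : Admissible X ω) (h' : Admissible X ω')
    (he : deltaSet X ω = deltaSet X ω') : ω = ω' := by
  have key : ∀ (w : List A) (x : ℕ → A), w ∈ shiftLang X → x ∈ X →
      deltaSet X (Sum.inl w) = deltaSet X (Sum.inr x) → False := by
    intro w x _ hx heq
    have hmem := ofFn_mem_delta_inr (X := X) hx (m := w.length + 1) (Nat.succ_pos _)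
    rw [← heq] at hmem
    have hlen := (mem_delta_inl.1 hmem).length_le
    simp at hlen
  cases ω with
  | inl w =>
    cases ω' with
    | inl w' =>
      have hmw : (some ⟨w, h⟩ : LangSG A (shiftLang X)) ∈ deltaSet X (Sum.inl w) :=
        mem_delta_inl.2 (List.prefix_refl _)
      have hmw' : (some ⟨w', h'⟩ : LangSG A (shiftLang X)) ∈ deltaSet X (Sum.inl w') :=
        mem_delta_inl.2 (List.prefix_refl _)
      rw [he] at hmw
      rw [← he] at hmw'
      have h1 := mem_delta_inl.1 hmw
      have h2 := mem_delta_inl.1 hmw'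
      exact congrArg Sum.inl (h1.eq_of_length (le_antisymm h1.length_le h2.length_le))
    | inr x => exact (key w x h h' he).elim
  | inr x =>
    cases ω' with
    | inl w => exact (key w x h' h he.symm).elim
    | inr y =>
      refine congrArg Sum.inr (funext fun i => ?_)
      have hmem := ofFn_mem_delta_inr (X := X) h (m := i + 1) (Nat.succ_pos _)
      rw [he] at hmem
      have hg := mem_delta_inr.1 hmem i (by simp)
      rw [ofFn_get] at hg
      exact hg

lemma delta_isString {ω : List A ⊕ (ℕ → A)} (hω : Admissible X ω) :
    langIsString (shiftLang X) (deltaSet X ω) := by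
  refine ⟨?_, none_not_mem_delta, ?_, ?_⟩
  · cases ω with
    | inl w => exact ⟨some ⟨w, hω⟩, mem_delta_inl.2 (List.prefix_refl _)⟩
    | inr x => exact ⟨_, ofFn_mem_delta_inr hω Nat.one_pos⟩
  · intro s t hdiv ht
    obtain ⟨b, rfl⟩ : ∃ b, t = some b := by
      cases t with
      | none => exact absurd ht none_not_mem_delta
      | some b => exact ⟨b, rfl⟩
    obtain ⟨a, rfl, hab⟩ := divides_some hdiv
    cases ω with
    | inl w => exact mem_delta_inl.2 (hab.trans (mem_delta_inl.1 ht))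
    | inr x =>
      refine mem_delta_inr.2 fun i hi => ?_
      have hb := mem_delta_inr.1 ht
      have hgi := hab.getElem hi
      simp only [List.get_eq_getElem] at hb ⊢
      rw [hgi]
      exact hb i (lt_of_lt_of_le hi hab.length_le)
  · intro s₁ h₁ s₂ h₂
    obtain ⟨p₁, rfl⟩ : ∃ p, s₁ = some p := by
      cases s₁ with
      | none => exact absurd h₁ none_not_mem_delta
      | some p => exact ⟨p, rfl⟩
    obtain ⟨p₂, rfl⟩ : ∃ p, s₂ = some p := by
      cases s₂ with
      | none => exact absurd h₂ none_not_mem_delta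
      | some p => exact ⟨p, rfl⟩
    have hcomp : p₁.1 <+: p₂.1 ∨ p₂.1 <+: p₁.1 := by
      cases ω with
      | inl w => exact List.prefix_or_prefix_of_prefix (mem_delta_inl.1 h₁) (mem_delta_inl.1 h₂)
      | inr x =>
        have g₁ := mem_delta_inr.1 h₁
        have g₂ := mem_delta_inr.1 h₂
        rcases le_total p₁.1.length p₂.1.length with hl | hl
        · exact Or.inl (prefix_of_get_eq hl fun i hi => by
            rw [g₁ i hi, g₂ i (lt_of_lt_of_le hi hl)])
        · exact Or.inr (prefix_of_get_eq hl fun i hi => by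
            rw [g₂ i hi, g₁ i (lt_of_lt_of_le hi hl)])
    rcases hcomp with hc | hc
    · exact ⟨some p₂, h₂, some_divides hc, Or.inl rfl⟩
    · exact ⟨some p₁, h₁, Or.inl rfl, some_divides hc⟩

lemma delta_open_iff {ω : List A ⊕ (ℕ → A)} (hω : Admissible X ω) :
    (deltaSet X ω = langInterior (shiftLang X) (deltaSet X ω)) ↔
      ∃ x : ℕ → A, ω = Sum.inr x := by
  constructor
  · intro heq
    cases ω with
    | inr x => exact ⟨x, rfl⟩
    | inl w =>
      exfalso
      have hw : (some ⟨w, hω⟩ : LangSG A (shiftLang X)) ∈ deltaSet X (Sum.inl w) :=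
        mem_delta_inl.2 (List.prefix_refl _)
      rw [heq] at hw
      obtain ⟨u, hu⟩ := hw
      match u, hu with
      | none, hu => exact none_not_mem_delta hu
      | some c, hu =>
        simp only [langMul] at hu
        split at hu
        · have hlen := (mem_delta_inl.1 hu).length_le
          rw [List.length_append] at hlen
          have : c.1.length = 0 := by omega
          exact c.2.1 (List.length_eq_zero_iff.1 this)
        · exact none_not_mem_delta hu
  · rintro ⟨x, rfl⟩
    apply Set.Subset.antisymm ?_ (interior_subset_of_string (delta_isString hω))
    intro s hs
    obtain ⟨p, rfl⟩ : ∃ p, s = some p := by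
      cases s with
      | none => exact absurd hs none_not_mem_delta
      | some p => exact ⟨p, rfl⟩
    have hp := mem_delta_inr.1 hs
    have hx : x ∈ X := hω
    have hqL : p.1 ++ [x p.1.length] ∈ shiftLang X :=
      agree_mem_lang hx (by simp) (snoc_agree hp)
    have hsingL : [x p.1.length] ∈ shiftLang X := suffix_mem_lang hqL (by simp)
    refine ⟨some ⟨[x p.1.length], hsingL⟩, ?_⟩
    simp only [langMul, dif_pos hqL]
    exact mem_delta_inr.2 (snoc_agree hp)

lemma delta_maximal_iff {ω : List A ⊕ (ℕ → A)} (hω : Admissible X ω) :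
    (∀ μ : Set (LangSG A (shiftLang X)), langIsString (shiftLang X) μ →
        deltaSet X ω ⊆ μ → deltaSet X ω = μ) ↔ ∃ x : ℕ → A, ω = Sum.inr x := by
  constructor
  · intro hmax
    cases ω with
    | inr x => exact ⟨x, rfl⟩
    | inl w =>
      exfalso
      obtain ⟨wne, y, hy, k, hg⟩ := hω
      have hw'L : w ++ [y (k + w.length)] ∈ shiftLang X := by
        refine ⟨by simp, y, hy, k, fun i hi => ?_⟩
        simp only [List.length_append, List.length_singleton] at hi
        simp only [List.get_eq_getElem]
        rcases lt_or_ge i w.length with h | h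
        · rw [List.getElem_append_left h]
          simpa only [List.get_eq_getElem] using hg i h
        · have : i = w.length := by omega
          subst this
          rw [List.getElem_append_right le_rfl]
          simp
      have hadm : Admissible X (Sum.inl (w ++ [y (k + w.length)])) := hw'L
      have hsub : deltaSet X (Sum.inl w) ⊆ deltaSet X (Sum.inl (w ++ [y (k + w.length)])) := by
        rintro s ⟨p, rfl, hpne, hpw⟩
        exact ⟨p, rfl, hpne, hpw.trans (List.prefix_append _ _)⟩
      have heq := hmax _ (delta_isString hadm) hsub
      have hmem : (some ⟨w ++ [y (k + w.length)], hw'L⟩ : LangSG A (shiftLang X)) ∈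
          deltaSet X (Sum.inl w) := by
        rw [heq]; exact mem_delta_inl.2 (List.prefix_refl _)
      have hlen := (mem_delta_inl.1 hmem).length_le
      rw [List.length_append, List.length_singleton] at hlen
      omega
  · rintro ⟨x, rfl⟩
    intro μ hμ hsub
    refine Set.Subset.antisymm hsub ?_
    intro t ht
    obtain ⟨q, rfl⟩ := string_mem_some hμ ht
    have hm0 : 0 < q.1.length := List.length_pos_iff.2 q.2.1
    have hpmem : (some ⟨_, ofFn_mem_lang hω hm0⟩ : LangSG A (shiftLang X)) ∈ μ :=
      hsub (ofFn_mem_delta_inr hω hm0)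
    have hcomp := string_comparable hμ ht hpmem
    have hlen : (List.ofFn fun j : Fin q.1.length => x j).length = q.1.length :=
      List.length_ofFn
    have hqeq : q.1 = List.ofFn fun j : Fin q.1.length => x j := by
      rcases hcomp with hc | hc
      · exact hc.eq_of_length (by rw [hlen])
      · exact (hc.eq_of_length (by rw [hlen])).symm
    refine mem_delta_inr.2 fun i hi => ?_
    simp only [List.get_eq_getElem]
    have hi' : i < q.1.length := hi
    conv_lhs => rw [List.getElem_of_eq hqeq]
    simp [List.getElem_ofFn]

end Main
section Four
variable {A : Type*} {X : Set (ℕ → A)}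

lemma string_eq_delta
    (hXcl : @IsClosed (ℕ → A) (@Pi.topologicalSpace ℕ (fun _ => A) (fun _ => ⊥)) X)
    (hXsh : ∀ x ∈ X, (fun n => x (n + 1)) ∈ X)
    {σ : Set (LangSG A (shiftLang X))} (hσ : langIsString (shiftLang X) σ) :
    ∃ ω : List A ⊕ (ℕ → A), Admissible X ω ∧ σ = deltaSet X ω := by
  classical
  by_cases hbdd : ∃ w : List A, (∃ h : w ∈ shiftLang X, some ⟨w, h⟩ ∈ σ) ∧
      ∀ v : List A, (∃ h : v ∈ shiftLang X, some ⟨v, h⟩ ∈ σ) → v.length ≤ w.length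
  · obtain ⟨w, ⟨hwL, hwσ⟩, hmax⟩ := hbdd
    refine ⟨Sum.inl w, hwL, ?_⟩
    ext s
    constructor
    · intro hs
      obtain ⟨a, rfl⟩ := string_mem_some hσ hs
      refine mem_delta_inl.2 ?_
      rcases string_comparable hσ hs hwσ with hc | hc
      · exact hc
      · have hle : a.1.length ≤ w.length := hmax a.1 ⟨a.2, hs⟩
        have heqq := hc.eq_of_length (le_antisymm hc.length_le hle)
        rw [← heqq]
    · rintro ⟨p, rfl, hpne, hpw⟩
      obtain ⟨h', hmem⟩ := string_prefix_closed hσ hwσ hpne hpw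
      exact hmem
  · push_neg at hbdd
    have hstep : ∀ w : List A, (∃ h : w ∈ shiftLang X, some ⟨w, h⟩ ∈ σ) →
        ∃ v : List A, (∃ h : v ∈ shiftLang X, some ⟨v, h⟩ ∈ σ) ∧ w.length < v.length := by
      intro w hw
      exact hbdd w hw
    have hgrow : ∀ n : ℕ, ∃ w : List A,
        (∃ h : w ∈ shiftLang X, some ⟨w, h⟩ ∈ σ) ∧ n < w.length := by
      intro n
      induction n with
      | zero =>
        obtain ⟨s, hs⟩ := hσ.1
        obtain ⟨a, rfl⟩ := string_mem_some hσ hs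
        exact ⟨a.1, ⟨a.2, hs⟩, List.length_pos_iff.2 a.2.1⟩
      | succ n ih =>
        obtain ⟨w, hw, hn⟩ := ih
        obtain ⟨v, hv, hlt⟩ := hstep w hw
        exact ⟨v, hv, by omega⟩
    choose f hf1 hf2 using hgrow
    set x : ℕ → A := fun i => (f i).get ⟨i, hf2 i⟩ with hx
    have hagree : ∀ w : List A, (∃ h : w ∈ shiftLang X, some ⟨w, h⟩ ∈ σ) →
        ∀ i (hi : i < w.length), w.get ⟨i, hi⟩ = x i := by
      intro w hw i hi
      obtain ⟨hwL, hwσ⟩ := hw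
      obtain ⟨hfL, hfσ⟩ := hf1 i
      have hcomp := string_comparable hσ (a := ⟨w, hwL⟩) (b := ⟨f i, hfL⟩) hwσ hfσ
      simp only [hx, List.get_eq_getElem]
      rcases hcomp with hc | hc
      · exact hc.getElem hi
      · exact (hc.getElem (hf2 i)).symm
    have hxX : x ∈ X := by
      have hz : ∀ n, ∃ z ∈ X, ∀ i ≤ n, z i = x i := by
        intro n
        obtain ⟨hfL, hfσ⟩ := hf1 n
        obtain ⟨-, y, hy, k, hg⟩ := hfL
        refine ⟨fun i => y (k + i), shift_iter hXsh hy k, fun i hi => ?_⟩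
        show y (k + i) = x i
        have hi' : i < (f n).length := lt_of_le_of_lt hi (hf2 n)
        rw [← hg i hi']
        exact hagree (f n) (hf1 n) i hi'
      choose z hz1 hz2 using hz
      exact limit_mem hXcl z hz1 hz2
    refine ⟨Sum.inr x, hxX, ?_⟩
    ext s
    constructor
    · intro hs
      obtain ⟨a, rfl⟩ := string_mem_some hσ hs
      exact mem_delta_inr.2 (hagree a.1 ⟨a.2, hs⟩)
    · rintro ⟨p, rfl, hpne, hpx⟩
      have hpre : p.1 <+: f p.1.length := by
        refine prefix_of_get_eq (le_of_lt (hf2 p.1.length)) fun i hi => ?_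
        rw [hpx i hi, hagree (f p.1.length) (hf1 p.1.length) i (lt_trans hi (hf2 p.1.length))]
      obtain ⟨hfL, hfσ⟩ := hf1 p.1.length
      obtain ⟨h', hmem⟩ := string_prefix_closed hσ hfσ hpne hpre
      exact hmem

end Four

/-- In the semigroup of a subshift: (i) `δ_ω` is a string for every admissible word `ω`;
(ii) `δ_ω` is open iff `ω` is infinite; (iii) `δ_ω` is maximal iff `ω` is infinite;
(iv) every string is `δ_ω` for a unique admissible word `ω`. -/
theorem subshift_strings {A : Type*} [Fintype A] (X : Set (ℕ → A)) (hXne : X.Nonempty)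
    (hXcl : @IsClosed (ℕ → A) (@Pi.topologicalSpace ℕ (fun _ => A) (fun _ => ⊥)) X)
    (hXsh : ∀ x ∈ X, (fun n => x (n + 1)) ∈ X) :
    (∀ ω : List A ⊕ (ℕ → A), Admissible X ω → langIsString (shiftLang X) (deltaSet X ω)) ∧
    (∀ ω : List A ⊕ (ℕ → A), Admissible X ω →
      ((deltaSet X ω = langInterior (shiftLang X) (deltaSet X ω)) ↔
        ∃ x : ℕ → A, ω = Sum.inr x)) ∧
    (∀ ω : List A ⊕ (ℕ → A), Admissible X ω →
      ((∀ μ : Set (LangSG A (shiftLang X)), langIsString (shiftLang X) μ →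
          deltaSet X ω ⊆ μ → deltaSet X ω = μ) ↔
        ∃ x : ℕ → A, ω = Sum.inr x)) ∧
    (∀ σ : Set (LangSG A (shiftLang X)), langIsString (shiftLang X) σ →
      ∃! ω : List A ⊕ (ℕ → A), Admissible X ω ∧ σ = deltaSet X ω) := by
  refine ⟨fun ω hω => delta_isString hω, fun ω hω => delta_open_iff hω,
    fun ω hω => delta_maximal_iff hω, fun σ hσ => ?_⟩
  obtain ⟨ω, hω, hσω⟩ := string_eq_delta hXcl hXsh hσ
  refine ⟨ω, ⟨hω, hσω⟩, ?_⟩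
  rintro ω' ⟨hω', hσω'⟩
  exact delta_inj hω' hω (hσω'.symm.trans hσω)

end ExSt
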